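/- arXiv:0901.0751 — 5 statements merged into one kernel-verified Lean document; each statement's English description precedes it below -/
import Mathlib

section
/- If U is uniformly distributed on (0,1), V is uniform on (0,1) independent of U, α > 0, X₀ = U^{-α}, and X₁ = (V^{-α/(1+α)} - 1)X₀ + 1, then X₁^{-1/α} is uniformly distributed on (0,1). -/
open MeasureTheory Set

lemma clayton_cont (α c : ℝ) (hα : 0 < α) (hc : 0 ≤ c) (e : ℝ) :
    ContinuousOn (fun u : ℝ => (1 + u ^ α * c) ^ e) (Icc 0 1) := by
  apply ContinuousOn.rpow_const
  · exact (continuous_const.add ((continuous_id.rpow_const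
      (fun x => Or.inr hα.le)).mul continuous_const)).continuousOn
  · intro x hx
    left
    have : 0 ≤ x ^ α * c := mul_nonneg (Real.rpow_nonneg hx.1 α) hc
    positivity

lemma clayton_ftc (α c : ℝ) (hα : 0 < α) (hc : 0 ≤ c) :
    ∫ u in (0:ℝ)..1, (1 + u ^ α * c) ^ (-((1 + α) / α)) = (1 + c) ^ (-(1 / α)) := by
  have hγ : -((1 + α) / α) = -(1/α) - 1 := by field_simp; ring
  have key : ∫ u in (0:ℝ)..1, (1 + u ^ α * c) ^ (-((1 + α) / α))
      = (fun u : ℝ => u * (1 + u ^ α * c) ^ (-(1/α))) 1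
        - (fun u : ℝ => u * (1 + u ^ α * c) ^ (-(1/α))) 0 := by
    apply intervalIntegral.integral_eq_sub_of_hasDeriv_right_of_le
      (f := fun u : ℝ => u * (1 + u ^ α * c) ^ (-(1/α)))
      (f' := fun u : ℝ => (1 + u ^ α * c) ^ (-((1 + α) / α))) (by norm_num)
    · exact (continuousOn_id.mul (clayton_cont α c hα hc _))
    · intro u hu
      have hu0 : 0 < u := hu.1
      have hs : 0 < 1 + u ^ α * c := by
        have : 0 ≤ u ^ α * c := mul_nonneg (Real.rpow_nonneg hu0.le α) hc
        positivity
      have h1 : HasDerivAt (fun u : ℝ => u ^ α) (α * u ^ (α - 1)) u :=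
        Real.hasDerivAt_rpow_const (Or.inl hu0.ne')
      have h2 : HasDerivAt (fun u : ℝ => 1 + u ^ α * c) (α * u ^ (α - 1) * c) u :=
        (h1.mul_const c).const_add 1
      have h3 : HasDerivAt (fun y : ℝ => y ^ (-(1/α)))
          ((-(1/α)) * (1 + u ^ α * c) ^ (-(1/α) - 1)) (1 + u ^ α * c) :=
        Real.hasDerivAt_rpow_const (Or.inl hs.ne')
      have h4 := h3.comp u h2
      have h5 := (hasDerivAt_id u).mul h4
      have heq : 1 * ((1 + u ^ α * c) ^ (-(1/α))) +
          u * ((-(1/α)) * (1 + u ^ α * c) ^ (-(1/α) - 1) * (α * u ^ (α - 1) * c))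
          = (1 + u ^ α * c) ^ (-((1 + α) / α)) := by
        have e1 : u * u ^ (α - 1) = u ^ α := by
          rw [Real.rpow_sub hu0, Real.rpow_one]
          field_simp
        have e2 : (1 + u ^ α * c) ^ (-(1/α))
            = (1 + u ^ α * c) * (1 + u ^ α * c) ^ (-(1/α) - 1) := by
          rw [show -(1/α) = (-(1/α) - 1) + 1 by ring, Real.rpow_add_one hs.ne', mul_comm]
          norm_num
        rw [hγ, e2]
        have : u * ((-(1/α)) * (1 + u ^ α * c) ^ (-(1/α) - 1) * (α * u ^ (α - 1) * c))
            = -((u ^ α * c) * (1 + u ^ α * c) ^ (-(1/α) - 1)) := by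
          rw [← e1]
          field_simp
        rw [this]
        ring
      rw [← heq]
      exact h5.hasDerivWithinAt
    · exact ((clayton_cont α c hα hc _).mono (by rw [uIcc_of_le] <;> norm_num)).intervalIntegrable
  rw [key]
  simp [Real.one_rpow]

lemma clayton_step_iff (α t u v : ℝ) (hα : 0 < α) (ht : t ∈ Ioo (0:ℝ) 1)
    (hu : u ∈ Ioo (0:ℝ) 1) (hv : v ∈ Ioo (0:ℝ) 1) :
    ((v ^ (-α / (1 + α)) - 1) * u ^ (-α) + 1) ^ (-1 / α) ≤ t ↔
      v ≤ (1 + u ^ α * (t ^ (-α) - 1)) ^ (-((1 + α) / α)) := by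
  have h1α : 0 < 1 + α := by linarith
  have hβ : -α / (1 + α) < 0 := div_neg_of_neg_of_pos (by linarith) h1α
  have hvβ : 1 ≤ v ^ (-α / (1 + α)) :=
    Real.one_le_rpow_of_pos_of_le_one_of_nonpos hv.1 hv.2.le hβ.le
  have huα : 0 < u ^ α := Real.rpow_pos_of_pos hu.1 α
  have hunα : 0 < u ^ (-α) := Real.rpow_pos_of_pos hu.1 (-α)
  have hX : 0 < (v ^ (-α / (1 + α)) - 1) * u ^ (-α) + 1 := by nlinarith
  have htα : 1 < t ^ (-α) := by
    rw [Real.one_lt_rpow_iff_of_pos ht.1]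
    exact Or.inr ⟨ht.2, by linarith⟩
  have hc : 0 < t ^ (-α) - 1 := by linarith
  have hK : 1 < 1 + u ^ α * (t ^ (-α) - 1) := by nlinarith
  have hK0 : (0:ℝ) < 1 + u ^ α * (t ^ (-α) - 1) := by linarith
  have hm0 : 0 < (1 + u ^ α * (t ^ (-α) - 1)) ^ (-((1 + α) / α)) :=
    Real.rpow_pos_of_pos hK0 _
  have hz : -1 / α < 0 := div_neg_of_neg_of_pos (by norm_num) hα
  -- step 1
  have s1 : ((v ^ (-α / (1 + α)) - 1) * u ^ (-α) + 1) ^ (-1 / α) ≤ t ↔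
      t ^ (-α) ≤ (v ^ (-α / (1 + α)) - 1) * u ^ (-α) + 1 := by
    nth_rewrite 1 [show t = (t ^ (-α)) ^ (-1 / α) by
      rw [← Real.rpow_mul ht.1.le]
      rw [show (-α) * (-1 / α) = 1 by field_simp, Real.rpow_one]]
    exact Real.rpow_le_rpow_iff_of_neg hX (Real.rpow_pos_of_pos ht.1 _) hz
  -- step 2+3
  have s2 : (t ^ (-α) ≤ (v ^ (-α / (1 + α)) - 1) * u ^ (-α) + 1) ↔
      1 + u ^ α * (t ^ (-α) - 1) ≤ v ^ (-α / (1 + α)) := by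
    rw [Real.rpow_neg hu.1.le]
    rw [← div_eq_mul_inv]
    constructor
    · intro h
      have h2 : t ^ (-α) - 1 ≤ (v ^ (-α / (1 + α)) - 1) / u ^ α := by linarith
      rw [le_div_iff₀ huα] at h2
      nlinarith
    · intro h
      have h2 : (t ^ (-α) - 1) * u ^ α ≤ v ^ (-α / (1 + α)) - 1 := by nlinarith
      rw [← le_div_iff₀ huα] at h2
      linarith
  -- step 4
  have s4 : (1 + u ^ α * (t ^ (-α) - 1) ≤ v ^ (-α / (1 + α))) ↔
      v ≤ (1 + u ^ α * (t ^ (-α) - 1)) ^ (-((1 + α) / α)) := by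
    nth_rewrite 1 [show 1 + u ^ α * (t ^ (-α) - 1)
        = ((1 + u ^ α * (t ^ (-α) - 1)) ^ (-((1 + α) / α))) ^ (-α / (1 + α)) by
      rw [← Real.rpow_mul hK0.le]
      rw [show (-((1 + α) / α)) * (-α / (1 + α)) = 1 by field_simp, Real.rpow_one]]
    exact (Real.rpow_le_rpow_iff_of_neg hm0 hv.1 hβ)
  rw [s1, s2, s4]

/-- If `U, V` are independent uniform(0,1) random variables, `α > 0`, `X₀ = U^(-α)` and
`X₁ = (V^(-α/(1+α)) - 1) X₀ + 1`, then `X₁^(-1/α)` is uniform(0,1). -/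
theorem clayton_markov_step_uniform
    {Ω : Type*} [MeasurableSpace Ω] (μ : Measure Ω) [IsProbabilityMeasure μ]
    (U V : Ω → ℝ) (hU : Measurable U) (hV : Measurable V)
    (hind : ProbabilityTheory.IndepFun U V μ)
    (hUlaw : Measure.map U μ = volume.restrict (Ioo (0 : ℝ) 1))
    (hVlaw : Measure.map V μ = volume.restrict (Ioo (0 : ℝ) 1))
    (α : ℝ) (hα : 0 < α) :
    Measure.map
        (fun ω => ((((V ω) ^ (-α / (1 + α)) - 1) * (U ω) ^ (-α) + 1) ^ (-1 / α))) μ =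
      volume.restrict (Ioo (0 : ℝ) 1) := by
  have h1α : 0 < 1 + α := by linarith
  set ν : Measure ℝ := volume.restrict (Ioo (0 : ℝ) 1) with hνdef
  set G : ℝ × ℝ → ℝ :=
    fun p => ((p.2 ^ (-α / (1 + α)) - 1) * p.1 ^ (-α) + 1) ^ (-1 / α) with hGdef
  have hmeasG : Measurable G := by
    rw [hGdef]; fun_prop
  have hprod : Measure.map (fun ω => (U ω, V ω)) μ = ν.prod ν := by
    have h := (ProbabilityTheory.indepFun_iff_map_prod_eq_prod_map_map
      hU.aemeasurable hV.aemeasurable).mp hind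
    rw [hUlaw, hVlaw] at h
    exact h
  have hcomp : Measure.map
      (fun ω => ((((V ω) ^ (-α / (1 + α)) - 1) * (U ω) ^ (-α) + 1) ^ (-1 / α))) μ
      = Measure.map G (ν.prod ν) := by
    rw [← hprod, Measure.map_map hmeasG (hU.prodMk hV)]
    rfl
  rw [hcomp]
  have hνprob : IsProbabilityMeasure ν := by
    constructor
    rw [hνdef, Measure.restrict_apply MeasurableSet.univ, univ_inter, Real.volume_Ioo]
    norm_num
  have hmapprob : IsProbabilityMeasure (Measure.map G (ν.prod ν)) :=
    Measure.isProbabilityMeasure_map hmeasG.aemeasurable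
  refine Measure.ext_of_Iic _ _ (fun t => ?_)
  rw [Measure.map_apply hmeasG measurableSet_Iic,
    Measure.prod_apply (hmeasG measurableSet_Iic)]
  have hsec : ∀ u : ℝ, Prod.mk u ⁻¹' (G ⁻¹' Iic t)
      = {v : ℝ | ((v ^ (-α / (1 + α)) - 1) * u ^ (-α) + 1) ^ (-1 / α) ≤ t} := by
    intro u; rw [hGdef]; rfl
  have hRHS : ν (Iic t) = volume (Iic t ∩ Ioo 0 1) := by
    rw [hνdef, Measure.restrict_apply measurableSet_Iic]
  rw [hRHS]
  rcases le_or_gt 1 t with ht1 | ht1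
  · -- t ≥ 1 : both sides are 1
    have hfull : ∀ u ∈ Ioo (0:ℝ) 1, ν (Prod.mk u ⁻¹' (G ⁻¹' Iic t)) = 1 := by
      intro u hu
      rw [hsec u, hνdef, Measure.restrict_apply' measurableSet_Ioo]
      have : {v : ℝ | ((v ^ (-α / (1 + α)) - 1) * u ^ (-α) + 1) ^ (-1 / α) ≤ t}
          ∩ Ioo 0 1 = Ioo 0 1 := by
        apply inter_eq_self_of_subset_right
        intro v hv
        have hβ : -α / (1 + α) < 0 := div_neg_of_neg_of_pos (by linarith) h1α
        have hvβ : 1 ≤ v ^ (-α / (1 + α)) :=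
          Real.one_le_rpow_of_pos_of_le_one_of_nonpos hv.1 hv.2.le hβ.le
        have hunα : 0 < u ^ (-α) := Real.rpow_pos_of_pos hu.1 (-α)
        have hX : 1 ≤ (v ^ (-α / (1 + α)) - 1) * u ^ (-α) + 1 := by nlinarith
        have : ((v ^ (-α / (1 + α)) - 1) * u ^ (-α) + 1) ^ (-1 / α) ≤ 1 :=
          Real.rpow_le_one_of_one_le_of_nonpos hX
            (le_of_lt (div_neg_of_neg_of_pos (by norm_num) hα))
        exact le_trans this ht1
      rw [this, Real.volume_Ioo]
      norm_num
    have : ∫⁻ u, ν (Prod.mk u ⁻¹' (G ⁻¹' Iic t)) ∂ν = ∫⁻ _, 1 ∂ν := by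
      apply lintegral_congr_ae
      filter_upwards [ae_restrict_mem measurableSet_Ioo] with u hu
      exact hfull u hu
    rw [this, lintegral_one, measure_univ]
    have : Iic t ∩ Ioo (0:ℝ) 1 = Ioo 0 1 := by
      apply inter_eq_self_of_subset_right
      intro v hv
      exact le_trans hv.2.le ht1
    rw [this, Real.volume_Ioo]
    norm_num
  rcases le_or_gt t 0 with ht0 | ht0
  · -- t ≤ 0 : both sides are 0
    have hempty : ∀ u ∈ Ioo (0:ℝ) 1, ν (Prod.mk u ⁻¹' (G ⁻¹' Iic t)) = 0 := by
      intro u hu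
      rw [hsec u, hνdef, Measure.restrict_apply' measurableSet_Ioo]
      have : {v : ℝ | ((v ^ (-α / (1 + α)) - 1) * u ^ (-α) + 1) ^ (-1 / α) ≤ t}
          ∩ Ioo 0 1 = ∅ := by
        apply eq_empty_of_forall_notMem
        rintro v ⟨hvle, hv⟩
        have hβ : -α / (1 + α) < 0 := div_neg_of_neg_of_pos (by linarith) h1α
        have hvβ : 1 ≤ v ^ (-α / (1 + α)) :=
          Real.one_le_rpow_of_pos_of_le_one_of_nonpos hv.1 hv.2.le hβ.le
        have hunα : 0 < u ^ (-α) := Real.rpow_pos_of_pos hu.1 (-α)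
        have hX : 0 < (v ^ (-α / (1 + α)) - 1) * u ^ (-α) + 1 := by nlinarith
        have : 0 < ((v ^ (-α / (1 + α)) - 1) * u ^ (-α) + 1) ^ (-1 / α) :=
          Real.rpow_pos_of_pos hX _
        simp only [mem_setOf_eq] at hvle
        linarith
      rw [this]
      simp
    have : ∫⁻ u, ν (Prod.mk u ⁻¹' (G ⁻¹' Iic t)) ∂ν = ∫⁻ _, 0 ∂ν := by
      apply lintegral_congr_ae
      filter_upwards [ae_restrict_mem measurableSet_Ioo] with u hu
      exact hempty u hu
    rw [this, lintegral_zero]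
    have : Iic t ∩ Ioo (0:ℝ) 1 = ∅ := by
      apply eq_empty_of_forall_notMem
      rintro v ⟨hvle, hv⟩
      have := mem_Iic.mp hvle
      linarith [hv.1]
    rw [this]
    simp
  · -- main case : 0 < t < 1
    have ht : t ∈ Ioo (0:ℝ) 1 := ⟨ht0, ht1⟩
    have htα : 1 < t ^ (-α) := by
      rw [Real.one_lt_rpow_iff_of_pos ht.1]
      exact Or.inr ⟨ht.2, by linarith⟩
    set c : ℝ := t ^ (-α) - 1 with hcdef
    have hc : 0 < c := by simp [hcdef]; linarith
    set m : ℝ → ℝ := fun u => (1 + u ^ α * c) ^ (-((1 + α) / α)) with hmdef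
    have hslice : ∀ u ∈ Ioo (0:ℝ) 1,
        ν (Prod.mk u ⁻¹' (G ⁻¹' Iic t)) = ENNReal.ofReal (m u) := by
      intro u hu
      have huα : 0 < u ^ α := Real.rpow_pos_of_pos hu.1 α
      have hK : 1 < 1 + u ^ α * c := by nlinarith
      have hm0 : 0 < m u := Real.rpow_pos_of_pos (by linarith) _
      have hm1 : m u < 1 := Real.rpow_lt_one_of_one_lt_of_neg hK
        (by have := div_pos h1α hα; linarith)
      rw [hsec u, hνdef, Measure.restrict_apply' measurableSet_Ioo]
      have hset : {v : ℝ | ((v ^ (-α / (1 + α)) - 1) * u ^ (-α) + 1) ^ (-1 / α) ≤ t}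
          ∩ Ioo 0 1 = Ioc 0 (m u) := by
        ext v
        simp only [mem_inter_iff, mem_setOf_eq, mem_Ioo, mem_Ioc]
        constructor
        · rintro ⟨hle, hv⟩
          exact ⟨hv.1, (clayton_step_iff α t u v hα ht hu hv).mp hle⟩
        · rintro ⟨hv0, hvm⟩
          have hv : v ∈ Ioo (0:ℝ) 1 := ⟨hv0, lt_of_le_of_lt hvm hm1⟩
          exact ⟨(clayton_step_iff α t u v hα ht hu hv).mpr hvm, hv⟩
      rw [hset, Real.volume_Ioc, sub_zero]
    have hcongr : ∫⁻ u, ν (Prod.mk u ⁻¹' (G ⁻¹' Iic t)) ∂ν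
        = ∫⁻ u in Ioo (0:ℝ) 1, ENNReal.ofReal (m u) ∂volume := by
      rw [hνdef]
      apply lintegral_congr_ae
      filter_upwards [ae_restrict_mem measurableSet_Ioo] with u hu
      exact hslice u hu
    rw [hcongr]
    have hmcont : ContinuousOn m (Icc 0 1) := clayton_cont α c hα hc.le _
    have hint : IntegrableOn m (Ioo (0:ℝ) 1) volume := by
      apply IntegrableOn.mono_set _ Ioo_subset_Icc_self
      exact hmcont.integrableOn_Icc
    have hlint : ∫⁻ u in Ioo (0:ℝ) 1, ENNReal.ofReal (m u) ∂volume
        = ENNReal.ofReal (∫ u in Ioo (0:ℝ) 1, m u ∂volume) := by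
      rw [MeasureTheory.ofReal_integral_eq_lintegral_ofReal hint]
      filter_upwards [ae_restrict_mem measurableSet_Ioo] with u hu
      have huα : 0 < u ^ α := Real.rpow_pos_of_pos hu.1 α
      have : (0:ℝ) < 1 + u ^ α * c := by nlinarith
      exact (Real.rpow_pos_of_pos this _).le
    rw [hlint]
    have hval : ∫ u in Ioo (0:ℝ) 1, m u ∂volume = t := by
      rw [← MeasureTheory.integral_Ioc_eq_integral_Ioo,
        ← intervalIntegral.integral_of_le (by norm_num : (0:ℝ) ≤ 1)]
      rw [hmdef]
      rw [clayton_ftc α c hα hc.le]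
      rw [hcdef]
      rw [show 1 + (t ^ (-α) - 1) = t ^ (-α) by ring, ← Real.rpow_mul ht.1.le]
      rw [show (-α) * (-(1/α)) = 1 by field_simp, Real.rpow_one]
    rw [hval]
    have : Iic t ∩ Ioo (0:ℝ) 1 = Ioc 0 t := by
      ext v
      simp only [mem_inter_iff, mem_Iic, mem_Ioo, mem_Ioc]
      constructor
      · rintro ⟨h1, h2⟩; exact ⟨h2.1, h1⟩
      · rintro ⟨h1, h2⟩; exact ⟨h2, h1, lt_of_le_of_lt h2 ht1⟩
    rw [this, Real.volume_Ioc, sub_zero]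
end

section
/- In the Clayton copula Markov chain in the transformed variables X_t = U_t^{-α} (state space (1,∞)), the conditional density of X₁ given X₀ = x is f(y|x) = ((1+α)/α) · x^{1+1/α} / (y - 1 + x)^{2+1/α} for y > 1, and for x in any bounded interval [1, x₀], f(y|x) ≥ x₀^{-1-1/α} f(y|x₀), so [1, x₀] is a small set. -/
open MeasureTheory Set

/-- For the Clayton copula Markov chain in variables `X_t = U_t^(-α)` (state space `(1,∞)`):
the conditional density of `X₁ = (V^(-α/(1+α)) - 1) x + 1` given `X₀ = x > 1` is
`f(y|x) = ((1+α)/α) x^(1+1/α) / (y-1+x)^(2+1/α)` on `y > 1`, and on `[1, x₀]` one has the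
minorization `f(y|x) ≥ x₀^(-1-1/α) f(y|x₀)`, so `[1, x₀]` is a small set. -/
theorem clayton_small_set (α : ℝ) (hα : 0 < α) (x₀ : ℝ) (hx₀ : 1 ≤ x₀) :
    (∀ x : ℝ, 1 < x →
        Measure.map (fun v : ℝ => (v ^ (-α / (1 + α)) - 1) * x + 1)
            (volume.restrict (Ioo (0 : ℝ) 1)) =
          volume.withDensity
            (fun y : ℝ =>
              ENNReal.ofReal
                (if 1 < y then
                    ((1 + α) / α) * x ^ (1 + 1 / α) / (y - 1 + x) ^ (2 + 1 / α)
                  else 0))) ∧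
      ∀ x ∈ Icc (1 : ℝ) x₀, ∀ y : ℝ, 1 < y →
        ((1 + α) / α) * x ^ (1 + 1 / α) / (y - 1 + x) ^ (2 + 1 / α) ≥
          x₀ ^ (-1 - 1 / α) *
            (((1 + α) / α) * x₀ ^ (1 + 1 / α) / (y - 1 + x₀) ^ (2 + 1 / α)) := by
  have hα1 : (0:ℝ) < 1 + α := by linarith
  have hβ : (0:ℝ) < 1 + 1/α := by positivity
  constructor
  · intro x hx
    have hx0 : (0:ℝ) < x := lt_trans one_pos hx
    have hγ : (0:ℝ) < α / (1 + α) := div_pos hα hα1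
    have hz : -α / (1 + α) < 0 := div_neg_of_neg_of_pos (neg_lt_zero.2 hα) hα1
    have hγinv : (-α / (1 + α))⁻¹ = -(1 + 1/α) := by
      rw [inv_div, div_neg, neg_inj, add_div, div_self hα.ne']
      ring
    have hg : Measurable (fun v : ℝ => (v ^ (-α / (1 + α)) - 1) * x + 1) := by
      fun_prop
    haveI : IsFiniteMeasure (volume.restrict (Ioo (0:ℝ) 1)) :=
      ⟨by simp [Real.volume_Ioo]⟩
    refine Measure.ext_of_Iic _ _ (fun a => ?_)
    rw [Measure.map_apply hg measurableSet_Iic,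
      Measure.restrict_apply (hg measurableSet_Iic),
      withDensity_apply _ measurableSet_Iic]
    by_cases ha : a ≤ 1
    · have h1 : (fun v : ℝ => (v ^ (-α / (1 + α)) - 1) * x + 1) ⁻¹' Iic a ∩ Ioo 0 1 = ∅ := by
        ext v
        simp only [mem_inter_iff, mem_preimage, mem_Iic, mem_Ioo, mem_empty_iff_false,
          iff_false, not_and, and_imp]
        intro hle h0 h1'
        have : 1 < v ^ (-α / (1 + α)) :=
          (Real.one_lt_rpow_iff_of_pos h0).2 (Or.inr ⟨h1', hz⟩)
        nlinarith
      have h2 : ∫⁻ y in Iic a, ENNReal.ofReal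
          (if 1 < y then ((1 + α) / α) * x ^ (1 + 1 / α) / (y - 1 + x) ^ (2 + 1 / α) else 0)
          = 0 := by
        rw [setLIntegral_congr_fun measurableSet_Iic
          (fun y hy => ?_), lintegral_zero]
        have : ¬ (1:ℝ) < y := by simp only [mem_Iic] at hy; linarith
        simp [this]
      rw [h1, h2]; simp
    · push_neg at ha
      have hax : (0:ℝ) < a - 1 + x := by linarith
      have ht : (0:ℝ) < (a - 1 + x) / x := div_pos hax hx0
      -- preimage computation
      have h1 : (fun v : ℝ => (v ^ (-α / (1 + α)) - 1) * x + 1) ⁻¹' Iic a ∩ Ioo 0 1 =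
          Ico (((a - 1 + x) / x) ^ (-(1 + 1/α))) 1 := by
        ext v
        simp only [mem_inter_iff, mem_preimage, mem_Iic, mem_Ioo, mem_Ico]
        constructor
        · rintro ⟨hle, h0, h1'⟩
          refine ⟨?_, h1'⟩
          have hvz : v ^ (-α / (1 + α)) ≤ (a - 1 + x) / x := by
            rw [le_div_iff₀ hx0]; nlinarith
          rw [← hγinv]
          exact (Real.rpow_inv_le_iff_of_neg ht h0 hz).mpr hvz
        · rintro ⟨hle, h1'⟩
          have h0 : 0 < v := lt_of_lt_of_le (Real.rpow_pos_of_pos ht _) hle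
          refine ⟨?_, h0, h1'⟩
          rw [← hγinv] at hle
          have hvz := (Real.rpow_inv_le_iff_of_neg ht h0 hz).mp hle
          rw [le_div_iff₀ hx0] at hvz
          nlinarith
      rw [h1, Real.volume_Ico]
      -- density side
      have hIic : Iic a = Iic 1 ∪ Ioc 1 a := (Iic_union_Ioc_eq_Iic ha.le).symm
      rw [hIic, lintegral_union measurableSet_Ioc (Iic_disjoint_Ioc le_rfl)]
      have h2 : ∫⁻ y in Iic (1:ℝ), ENNReal.ofReal
          (if 1 < y then ((1 + α) / α) * x ^ (1 + 1 / α) / (y - 1 + x) ^ (2 + 1 / α) else 0)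
          = 0 := by
        rw [setLIntegral_congr_fun measurableSet_Iic
          (fun y hy => ?_), lintegral_zero]
        have : ¬ (1:ℝ) < y := by simp only [mem_Iic] at hy; linarith
        simp [this]
      rw [h2, zero_add]
      have h3 : ∫⁻ y in Ioc (1:ℝ) a, ENNReal.ofReal
          (if 1 < y then ((1 + α) / α) * x ^ (1 + 1 / α) / (y - 1 + x) ^ (2 + 1 / α) else 0)
          = ∫⁻ y in Ioc (1:ℝ) a, ENNReal.ofReal
              (((1 + α) / α) * x ^ (1 + 1 / α) / (y - 1 + x) ^ (2 + 1 / α)) := by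
        refine setLIntegral_congr_fun measurableSet_Ioc (fun y hy => ?_)
        simp [hy.1]
      rw [h3]
      have hcont : ContinuousOn
          (fun y : ℝ => ((1 + α) / α) * x ^ (1 + 1 / α) / (y - 1 + x) ^ (2 + 1 / α))
          (Icc 1 a) := by
        apply ContinuousOn.div continuousOn_const
        · exact (((continuousOn_id.sub continuousOn_const).add continuousOn_const).rpow_const
            (fun y hy => Or.inl (by (try simp only [id, Pi.add_apply, Pi.sub_apply]); rcases hy with ⟨hy1, _⟩; nlinarith)))
        · intro y hy
          rcases hy with ⟨hy1, _⟩
          have : (0:ℝ) < y - 1 + x := by linarith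
          exact ne_of_gt (Real.rpow_pos_of_pos this _)
      have hint : IntegrableOn
          (fun y : ℝ => ((1 + α) / α) * x ^ (1 + 1 / α) / (y - 1 + x) ^ (2 + 1 / α))
          (Ioc 1 a) := (hcont.integrableOn_Icc).mono_set Ioc_subset_Icc_self
      have hnn : 0 ≤ᵐ[volume.restrict (Ioc (1:ℝ) a)]
          (fun y : ℝ => ((1 + α) / α) * x ^ (1 + 1 / α) / (y - 1 + x) ^ (2 + 1 / α)) := by
        refine ae_restrict_of_forall_mem measurableSet_Ioc (fun y hy => ?_)
        have h1y : (0:ℝ) < y - 1 + x := by rcases hy with ⟨hy1, _⟩; linarith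
        positivity
      rw [← ofReal_integral_eq_lintegral_ofReal hint hnn]
      -- compute the integral by FTC
      have hFTC : ∫ y in Ioc (1:ℝ) a,
          ((1 + α) / α) * x ^ (1 + 1 / α) / (y - 1 + x) ^ (2 + 1 / α)
          = 1 - ((a - 1 + x) / x) ^ (-(1 + 1/α)) := by
        rw [← intervalIntegral.integral_of_le ha.le]
        have key : ∀ y ∈ uIcc (1:ℝ) a,
            HasDerivAt (fun y : ℝ => -(x ^ (1 + 1/α)) * (y - 1 + x) ^ (-(1 + 1/α)))
              (((1 + α) / α) * x ^ (1 + 1 / α) / (y - 1 + x) ^ (2 + 1 / α)) y := by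
          intro y hy
          rw [uIcc_of_le ha.le] at hy
          have h1y : (0:ℝ) < y - 1 + x := by rcases hy with ⟨hy1, _⟩; linarith
          have hd1 : HasDerivAt (fun y : ℝ => y - 1 + x) 1 y := by
            simpa using ((hasDerivAt_id y).sub_const 1).add_const x
          have hd2 : HasDerivAt (fun y : ℝ => (y - 1 + x) ^ (-(1 + 1/α)))
              ((-(1 + 1/α)) * (y - 1 + x) ^ (-(1 + 1/α) - 1) * 1) y :=
            HasDerivAt.comp (h₂ := fun t : ℝ => t ^ (-(1 + 1/α))) y (Real.hasDerivAt_rpow_const (Or.inl (ne_of_gt h1y))) hd1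
          have hd3 := hd2.const_mul (-(x ^ (1 + 1/α)))
          convert hd3 using 1 <;> try rfl
          have he : -(1 + 1/α) - 1 = -(2 + 1/α) := by ring
          rw [he, Real.rpow_neg h1y.le]
          have hC : (1 + α)/α = 1 + 1/α := by field_simp; ring
          have hne : ((y - 1 + x) ^ (2 + 1/α)) ≠ 0 := ne_of_gt (Real.rpow_pos_of_pos h1y _)
          field_simp [hC]
          ring
        have hii : IntervalIntegrable
            (fun y : ℝ => ((1 + α) / α) * x ^ (1 + 1 / α) / (y - 1 + x) ^ (2 + 1 / α))
            volume 1 a := by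
          rw [intervalIntegrable_iff_integrableOn_Ioc_of_le ha.le]
          exact hint
        rw [intervalIntegral.integral_eq_sub_of_hasDerivAt key hii]
        have h11 : (1:ℝ) - 1 + x = x := by ring
        rw [h11]
        have hxx : x ^ (1 + 1/α) * x ^ (-(1 + 1/α)) = 1 := by
          rw [← Real.rpow_add hx0, show (1 + 1/α) + -(1 + 1/α) = (0:ℝ) by ring, Real.rpow_zero]
        have hdiv : ((a - 1 + x) / x) ^ (-(1 + 1/α))
            = (a - 1 + x) ^ (-(1 + 1/α)) / x ^ (-(1 + 1/α)) :=
          Real.div_rpow hax.le hx0.le _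
        have hinv : (x ^ (-(1 + 1/α)))⁻¹ = x ^ (1 + 1/α) := by
          rw [← Real.rpow_neg hx0.le, neg_neg]
        rw [hdiv, div_eq_mul_inv ((a - 1 + x) ^ (-(1 + 1/α))) (x ^ (-(1 + 1/α))), hinv]
        linear_combination hxx
      rw [hFTC]
  · intro x hxmem y hy
    rcases hxmem with ⟨hx1, hxx0⟩
    have hx0' : (0:ℝ) < x₀ := lt_of_lt_of_le one_pos hx₀
    have hx0 : (0:ℝ) < x := lt_of_lt_of_le one_pos hx1
    have hC : (0:ℝ) < (1 + α)/α := div_pos hα1 hα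
    have hyx : (0:ℝ) < y - 1 + x := by linarith
    have hyx0 : (0:ℝ) < y - 1 + x₀ := by linarith
    have hxpow : (1:ℝ) ≤ x ^ (1 + 1/α) := by
      calc (1:ℝ) = 1 ^ (1 + 1/α) := (Real.one_rpow _).symm
        _ ≤ x ^ (1 + 1/α) := Real.rpow_le_rpow zero_le_one hx1 hβ.le
    have hx0pow : x₀ ^ (-1 - 1/α) * x₀ ^ (1 + 1/α) = 1 := by
      rw [← Real.rpow_add hx0']; norm_num
    have hden : (y - 1 + x) ^ (2 + 1/α) ≤ (y - 1 + x₀) ^ (2 + 1/α) :=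
      Real.rpow_le_rpow hyx.le (by linarith) (by positivity)
    have hrhs : x₀ ^ (-1 - 1/α) * (((1 + α) / α) * x₀ ^ (1 + 1 / α) / (y - 1 + x₀) ^ (2 + 1/α))
        = ((1 + α)/α) / (y - 1 + x₀) ^ (2 + 1/α) := by
      rw [mul_div_assoc']
      congr 1
      rw [show x₀ ^ (-1 - 1/α) * ((1 + α)/α * x₀ ^ (1 + 1/α))
        = ((1 + α)/α) * (x₀ ^ (-1 - 1/α) * x₀ ^ (1 + 1/α)) by ring, hx0pow, mul_one]
    rw [ge_iff_le, hrhs]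
    have hA : (0:ℝ) < (y - 1 + x) ^ (2 + 1/α) := Real.rpow_pos_of_pos hyx _
    apply div_le_div₀ (by positivity) ?_ hA hden
    nlinarith [hC]
end

section
/- For the Gumbel copula Markov chain in transformed variables X_t = (-log U_t)^α with α > 1, the conditional expectation satisfies E[X_{t+1} | X_t = x] = α x^{1 - 1/α} for all x > 0. -/
open MeasureTheory Set

/-- Gumbel chain conditional mean: with `f(x) = α⁻¹ x^(1/α-1) exp(-x^(1/α))` and
`P(X_{t+1} ≥ x₂ | X_t = x) = f(x + x₂)/f(x)`, one has
`E[X_{t+1} | X_t = x] = ∫₀^∞ f(x + x₂)/f(x) dx₂ = α x^(1-1/α)` for all `x > 0`. -/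
theorem gumbel_conditional_mean (α : ℝ) (hα : 1 < α) (x : ℝ) (hx : 0 < x) :
    ∫ y in Ioi (0 : ℝ),
        (α⁻¹ * (x + y) ^ (1 / α - 1) * Real.exp (-(x + y) ^ (1 / α))) /
          (α⁻¹ * x ^ (1 / α - 1) * Real.exp (-x ^ (1 / α))) =
      α * x ^ (1 - 1 / α) := by
  have hα0 : (0:ℝ) < α := lt_trans one_pos hα
  set c : ℝ := α⁻¹ * x ^ (1 / α - 1) * Real.exp (-x ^ (1 / α)) with hc
  have hcpos : 0 < c := by positivity
  have key : ∫ y in Ioi (0:ℝ),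
      (α⁻¹ * (x + y) ^ (1 / α - 1) * Real.exp (-(x + y) ^ (1 / α))) / c
      = 0 - (-(Real.exp (-(x + 0) ^ (1 / α))) / c) := by
    apply integral_Ioi_of_hasDerivAt_of_nonneg'
        (g := fun y => -(Real.exp (-(x + y) ^ (1 / α))) / c)
    · intro y hy
      have hxy : 0 < x + y := by
        have : (0:ℝ) ≤ y := hy
        linarith
      have h1 : HasDerivAt (fun y : ℝ => x + y) 1 y := (hasDerivAt_id y).const_add x
      have h2 : HasDerivAt (fun y : ℝ => (x + y) ^ (1 / α))
          ((1 / α * (x + y) ^ (1 / α - 1)) * 1) y := by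
        exact (Real.hasDerivAt_rpow_const (Or.inl hxy.ne')).comp y h1
      have h3 : HasDerivAt (fun y : ℝ => Real.exp (-(x + y) ^ (1 / α)))
          (Real.exp (-(x + y) ^ (1 / α)) * -((1 / α * (x + y) ^ (1 / α - 1)) * 1)) y :=
        (Real.hasDerivAt_exp _).comp y h2.neg
      have h4 := (h3.neg).div_const c
      refine h4.congr_deriv ?_
      field_simp
    · intro y hy
      have hxy : 0 < x + y := by
        have : (0:ℝ) ≤ y := le_of_lt hy
        linarith
      positivity
    · have h1 : Filter.Tendsto (fun y : ℝ => x + y) Filter.atTop Filter.atTop :=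
        Filter.tendsto_atTop_add_const_left _ x Filter.tendsto_id
      have h2 : Filter.Tendsto (fun y : ℝ => (x + y) ^ (1 / α)) Filter.atTop Filter.atTop :=
        (tendsto_rpow_atTop (by positivity)).comp h1
      have h3 : Filter.Tendsto (fun y : ℝ => Real.exp (-(x + y) ^ (1 / α)))
          Filter.atTop (nhds 0) :=
        Real.tendsto_exp_atBot.comp (Filter.tendsto_neg_atBot_iff.mpr h2)
      have h4 := (h3.neg).div_const c
      simpa using h4
  rw [key]
  have hxpow : (0:ℝ) < x ^ (1 / α - 1) := Real.rpow_pos_of_pos hx _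
  have hexp : (0:ℝ) < Real.exp (-x ^ (1 / α)) := Real.exp_pos _
  have hrpow : x ^ (1 / α - 1) * x ^ (1 - 1 / α) = 1 := by
    rw [← Real.rpow_add hx]
    norm_num
  rw [add_zero, zero_sub, neg_div, neg_neg, hc, div_eq_iff (by positivity)]
  have : α * x ^ (1 - 1 / α) * (α⁻¹ * x ^ (1 / α - 1) * Real.exp (-x ^ (1 / α)))
      = (α * α⁻¹) * (x ^ (1 / α - 1) * x ^ (1 - 1 / α)) * Real.exp (-x ^ (1 / α)) := by ring
  rw [this, hrpow, mul_inv_cancel₀ hα0.ne']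
  ring
end

section
/- For α > 1, the constant κ_α = (1 - 1/α) · B(1 - 1/(2α), 1 - 1/(2α)) satisfies κ_α < 1, where B is the Beta function. -/
open MeasureTheory Set

private lemma rpow_integral_Ioo {p : ℝ} (hp : -1 < p) (hp0 : p ≠ -1) :
    ∫ t in Ioo (0 : ℝ) 1, t ^ p = 1 / (p + 1) := by
  rw [← integral_Ioc_eq_integral_Ioo, ← intervalIntegral.integral_of_le zero_le_one,
    integral_rpow (Or.inl hp)]
  rw [Real.one_rpow, Real.zero_rpow (by intro h; apply hp0; linarith)]
  ring

private lemma rpow_one_sub_integral_Ioo {p : ℝ} (hp : -1 < p) (hp0 : p ≠ -1) :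
    ∫ t in Ioo (0 : ℝ) 1, (1 - t) ^ p = 1 / (p + 1) := by
  rw [← integral_Ioc_eq_integral_Ioo, ← intervalIntegral.integral_of_le zero_le_one]
  have := intervalIntegral.integral_comp_sub_left (fun x : ℝ => x ^ p) 1 (a := 0) (b := 1)
  simp only [sub_zero, sub_self] at this
  rw [this, integral_rpow (Or.inl hp), Real.one_rpow,
    Real.zero_rpow (by intro h; apply hp0; linarith)]
  ring

/-- For `α > 1`, `κ_α = (1 - 1/α) B(1 - 1/(2α), 1 - 1/(2α)) < 1`, where
`B(a,b) = ∫₀¹ t^(a-1)(1-t)^(b-1) dt` is the Beta function. -/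
theorem gumbel_drift_constant_lt_one (α : ℝ) (hα : 1 < α) :
    (1 - 1 / α) *
        (∫ t in Ioo (0 : ℝ) 1,
          t ^ ((1 - 1 / (2 * α)) - 1) * (1 - t) ^ ((1 - 1 / (2 * α)) - 1)) < 1 := by
  have hα0 : (0 : ℝ) < α := lt_trans one_pos hα
  set b : ℝ := 1 / (2 * α) with hbdef
  have hb0 : 0 < b := by positivity
  have hb2 : b < 1 / 2 := by
    rw [hbdef, div_lt_div_iff₀ (by positivity) two_pos]
    linarith
  have hexp : (1 - 1 / (2 * α)) - 1 = -b := by rw [hbdef]; ring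
  rw [hexp]
  have hc : 1 - 1 / α = 1 - 2 * b := by rw [hbdef]; field_simp
  rw [hc]
  have hc0 : 0 < 1 - 2 * b := by linarith
  -- the exponent -2b is in (-1, 0)
  have hp : (-1 : ℝ) < -(2 * b) := by linarith
  have hp0 : -(2 * b) ≠ -1 := by intro h; nlinarith
  -- integrability facts
  have hint1 : IntegrableOn (fun t : ℝ => t ^ (-(2 * b))) (Ioo 0 1) := by
    have := (intervalIntegral.intervalIntegrable_rpow' hp (a := (0:ℝ)) (b := 1)).1
    exact this.mono_set Ioo_subset_Ioc_self
  have hint2 : IntegrableOn (fun t : ℝ => (1 - t) ^ (-(2 * b))) (Ioo 0 1) := by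
    have h0 := (intervalIntegral.intervalIntegrable_rpow' hp (a := (0:ℝ)) (b := 1)).comp_sub_left 1
    simp only [sub_zero, sub_self] at h0
    exact h0.symm.1.mono_set Ioo_subset_Ioc_self
  -- the dominating function (arithmetic mean of squares)
  set S : ℝ → ℝ := fun t => (t ^ (-(2 * b)) + (1 - t) ^ (-(2 * b))) / 2 with hSdef
  have hSint : IntegrableOn S (Ioo 0 1) := ((hint1.add hint2).div_const 2)
  -- pointwise: on Ioo, product of rpow equals rpow of sum etc.
  have hsq : ∀ t ∈ Ioo (0:ℝ) 1, t ^ (-b) * t ^ (-b) = t ^ (-(2 * b)) := by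
    intro t ht
    rw [← Real.rpow_add ht.1]
    congr 1
    ring
  have hsq' : ∀ t ∈ Ioo (0:ℝ) 1, (1 - t) ^ (-b) * (1 - t) ^ (-b) = (1 - t) ^ (-(2 * b)) := by
    intro t ht
    rw [← Real.rpow_add (by linarith [ht.2] : (0:ℝ) < 1 - t)]
    congr 1
    ring
  -- pointwise AM-GM
  have hAMGM : ∀ t ∈ Ioo (0:ℝ) 1, t ^ (-b) * (1 - t) ^ (-b) ≤ S t := by
    intro t ht
    have h := two_mul_le_add_sq (t ^ (-b)) ((1 - t) ^ (-b))
    have h1 := hsq t ht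
    have h2 := hsq' t ht
    simp only [hSdef]
    nlinarith [h]
  have hmeas : AEStronglyMeasurable (fun t : ℝ => t ^ (-b) * (1 - t) ^ (-b))
      (volume.restrict (Ioo (0:ℝ) 1)) := by
    have hf : ContinuousOn (fun t : ℝ => t ^ (-b)) (Ioo 0 1) :=
      continuousOn_id.rpow_const fun x hx => Or.inl (ne_of_gt hx.1)
    have hg : ContinuousOn (fun t : ℝ => (1 - t) ^ (-b)) (Ioo 0 1) :=
      (continuous_const.sub continuous_id).continuousOn.rpow_const fun x hx =>
        Or.inl (by simpa using (sub_pos.2 hx.2).ne')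
    exact (hf.mul hg).aestronglyMeasurable measurableSet_Ioo
  have hnonneg : ∀ t ∈ Ioo (0:ℝ) 1, 0 ≤ t ^ (-b) * (1 - t) ^ (-b) := by
    intro t ht
    have := Real.rpow_nonneg (le_of_lt ht.1) (-b)
    have := Real.rpow_nonneg (by linarith [ht.2] : (0:ℝ) ≤ 1 - t) (-b)
    positivity
  have hfgint : IntegrableOn (fun t : ℝ => t ^ (-b) * (1 - t) ^ (-b)) (Ioo 0 1) := by
    apply Integrable.mono' hSint hmeas
    filter_upwards [ae_restrict_mem measurableSet_Ioo] with t ht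
    rw [Real.norm_eq_abs, abs_of_nonneg (hnonneg t ht)]
    exact hAMGM t ht
  -- strict inequality of integrals: ∫ fg < ∫ S
  have hdiffpos : 0 < ∫ t in Ioo (0:ℝ) 1, (S t - t ^ (-b) * (1 - t) ^ (-b)) := by
    rw [integral_pos_iff_support_of_nonneg_ae]
    · -- support has positive measure
      have hsub : Ioo (0:ℝ) 1 \ {1/2} ⊆
          Function.support (fun t => S t - t ^ (-b) * (1 - t) ^ (-b)) := by
        intro t ⟨ht, htne⟩
        have htne' : t ≠ 1/2 := htne
        have hne : t ^ (-b) ≠ (1 - t) ^ (-b) := by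
          rcases lt_trichotomy t (1 - t) with h | h | h
          · exact ne_of_gt (Real.rpow_lt_rpow_of_neg ht.1 h (by linarith))
          · exact absurd (by linarith : t = 1/2) htne'
          · exact ne_of_lt (Real.rpow_lt_rpow_of_neg (by linarith [ht.2]) h (by linarith))
        have h1 := hsq t ht
        have h2 := hsq' t ht
        have : 0 < S t - t ^ (-b) * (1 - t) ^ (-b) := by
          simp only [hSdef]
          nlinarith [sq_pos_of_ne_zero (sub_ne_zero.2 hne),
            sq_nonneg (t ^ (-b) - (1 - t) ^ (-b))]
        exact ne_of_gt this
      calc (0 : ENNReal) < volume (Ioo (0:ℝ) 1 \ {1/2}) := by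
            rw [measure_diff_null (measure_singleton _)]
            simp [Real.volume_Ioo]
        _ ≤ (volume.restrict (Ioo (0:ℝ) 1))
              (Function.support fun t => S t - t ^ (-b) * (1 - t) ^ (-b)) := by
            rw [Measure.restrict_apply']
            · exact measure_mono (subset_inter hsub diff_subset)
            · exact measurableSet_Ioo
    · filter_upwards [ae_restrict_mem measurableSet_Ioo] with t ht
      exact sub_nonneg.2 (hAMGM t ht)
    · exact hSint.sub hfgint
  have hSval : ∫ t in Ioo (0:ℝ) 1, S t = 1 / (1 - 2 * b) := by
    simp only [hSdef]
    rw [integral_div, integral_add hint1 hint2,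
      rpow_integral_Ioo hp hp0, rpow_one_sub_integral_Ioo hp hp0]
    have : -(2 * b) + 1 = 1 - 2 * b := by ring
    rw [this]
    ring
  have hlt : ∫ t in Ioo (0:ℝ) 1, t ^ (-b) * (1 - t) ^ (-b) < 1 / (1 - 2 * b) := by
    have := integral_sub hSint hfgint
    rw [this] at hdiffpos
    rw [← hSval]
    linarith
  calc (1 - 2 * b) * ∫ t in Ioo (0:ℝ) 1, t ^ (-b) * (1 - t) ^ (-b)
      < (1 - 2 * b) * (1 / (1 - 2 * b)) := by
        exact mul_lt_mul_of_pos_left hlt hc0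
    _ = 1 := by field_simp
end

section
/- For the EFGM copula with |α| < 1, the Fisher information for α with known uniform marginals equals Σ(α) = ∫₀¹∫₀¹ (1 - 2u1 - 2u2 + 4u1u2)² / (1 + α - 2α(u1+u2) + 4α u1 u2) du1 du2 = Σ_{k=1}^∞ α^{2k-2}/(1+2k)² (in particular the series converges). -/
open MeasureTheory Set


lemma integral_pow_aux (m : ℕ) :
    ∫ u in Ioo (0:ℝ) 1, (1 - 2*u)^m = (1 + (-1:ℝ)^m) / (2*(m+1)) := by
  rw [← integral_Ioc_eq_integral_Ioo, ← intervalIntegral.integral_of_le zero_le_one]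
  have hm : ((m:ℝ)+1) ≠ 0 := by positivity
  have key : ∀ u ∈ Set.uIcc (0:ℝ) 1,
      HasDerivAt (fun u : ℝ => -(1-2*u)^(m+1)/(2*(m+1))) ((1-2*u)^m) u := by
    intro u _
    have h1 : HasDerivAt (fun u : ℝ => 1 - 2*u) (-2) u := by
      simpa using ((hasDerivAt_id u).const_mul 2).const_sub (1:ℝ)
    have h2 := ((h1.pow (m+1)).neg).div_const (2*(m+1))
    refine HasDerivAt.congr_deriv h2 ?_
    push_cast
    field_simp
  rw [intervalIntegral.integral_eq_sub_of_hasDerivAt key (Continuous.intervalIntegrable (by continuity) 0 1)]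
  have : ((1:ℝ)-2*1) = -1 := by norm_num
  field_simp
  ring


lemma swap_tsum_integral (f : ℕ → ℝ → ℝ) (hc : ∀ n, Continuous (f n)) (C : ℕ → ℝ)
    (hC : ∀ n, ∀ u ∈ Ioo (0:ℝ) 1, |f n u| ≤ C n) (hS : Summable C) :
    ∫ u in Ioo (0:ℝ) 1, ∑' n, f n u = ∑' n, ∫ u in Ioo (0:ℝ) 1, f n u := by
  have hC0 : ∀ n, 0 ≤ C n := fun n => le_trans (abs_nonneg _) (hC n (1/2) (by norm_num))
  refine integral_tsum (fun n => (hc n).aestronglyMeasurable) ?_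
  have hb : ∀ n, ∫⁻ u in Ioo (0:ℝ) 1, ‖f n u‖₊ ≤ ENNReal.ofReal (C n) := by
    intro n
    calc ∫⁻ u in Ioo (0:ℝ) 1, ‖f n u‖₊
        ≤ ∫⁻ _ in Ioo (0:ℝ) 1, ENNReal.ofReal (C n) := by
          refine lintegral_mono_ae (ae_restrict_of_forall_mem measurableSet_Ioo ?_)
          intro u hu
          rw [← enorm_eq_nnnorm, ← ofReal_norm]
          exact ENNReal.ofReal_le_ofReal ((Real.norm_eq_abs _ ▸ hC n u hu))
      _ = ENNReal.ofReal (C n) := by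
          rw [setLIntegral_const]
          simp [Real.volume_Ioo]
  apply ne_top_of_le_ne_top (b := ENNReal.ofReal (∑' n, C n)) ENNReal.ofReal_ne_top
  calc ∑' n, ∫⁻ u in Ioo (0:ℝ) 1, ‖f n u‖₊
      ≤ ∑' n, ENNReal.ofReal (C n) := ENNReal.tsum_le_tsum hb
    _ = ENNReal.ofReal (∑' n, C n) := (ENNReal.ofReal_tsum_of_nonneg hC0 hS).symm


lemma abs_lin_le {u : ℝ} (hu : u ∈ Ioo (0:ℝ) 1) : |1 - 2*u| ≤ 1 := by
  rw [abs_le]; constructor <;> nlinarith [hu.1, hu.2]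

lemma geom_expand (α : ℝ) (hα : |α| < 1) {g : ℝ} (hg : |g| ≤ 1) :
    g^2 / (1 + α * g) = ∑' n : ℕ, (-α)^n * g^(n+2) := by
  have h1 : |(-α) * g| < 1 := by
    rw [abs_mul, abs_neg]
    calc |α| * |g| ≤ |α| * 1 := by
          exact mul_le_mul_of_nonneg_left hg (abs_nonneg _)
      _ < 1 := by simpa using hα
  have h2 : (1 : ℝ) + α * g ≠ 0 := by
    have := abs_lt.1 h1
    nlinarith [this.1, this.2]
  have : ∀ n : ℕ, (-α)^n * g^(n+2) = g^2 * ((-α) * g)^n := fun n => by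
    rw [mul_pow]; ring
  rw [tsum_congr this, tsum_mul_left, tsum_geometric_of_abs_lt_one h1]
  field_simp
  ring
lemma inner_eq (α : ℝ) (hα : |α| < 1) {u₁ : ℝ} (h₁ : u₁ ∈ Ioo (0:ℝ) 1) :
    ∫ u₂ in Ioo (0:ℝ) 1,
        (1 - 2*u₁ - 2*u₂ + 4*u₁*u₂)^2 / (1 + α - 2*α*(u₁+u₂) + 4*α*u₁*u₂)
      = ∑' n : ℕ, (-α)^n * (1-2*u₁)^(n+2) * ((1 + (-1:ℝ)^n)/(2*(n+3))) := by
  have hstep : ∫ u₂ in Ioo (0:ℝ) 1,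
      (1 - 2*u₁ - 2*u₂ + 4*u₁*u₂)^2 / (1 + α - 2*α*(u₁+u₂) + 4*α*u₁*u₂)
      = ∫ u₂ in Ioo (0:ℝ) 1, ∑' n : ℕ, (-α)^n * ((1-2*u₁)*(1-2*u₂))^(n+2) := by
    refine setIntegral_congr_fun measurableSet_Ioo (fun u₂ h₂ => ?_)
    have hg : |(1-2*u₁)*(1-2*u₂)| ≤ 1 := by
      rw [abs_mul]
      calc |1-2*u₁| * |1-2*u₂| ≤ 1 * 1 :=
            mul_le_mul (abs_lin_le h₁) (abs_lin_le h₂) (abs_nonneg _) zero_le_one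
        _ = 1 := one_mul 1
    have h := geom_expand α hα hg
    rw [show (1 - 2*u₁ - 2*u₂ + 4*u₁*u₂) = (1-2*u₁)*(1-2*u₂) by ring,
        show (1 + α - 2*α*(u₁+u₂) + 4*α*u₁*u₂) = 1 + α*((1-2*u₁)*(1-2*u₂)) by ring]
    exact h
  rw [hstep, swap_tsum_integral _ (fun n => by continuity) (fun n => |α|^n) ?_ 
      (summable_geometric_of_lt_one (abs_nonneg α) hα)]
  · refine tsum_congr fun n => ?_
    calc ∫ u₂ in Ioo (0:ℝ) 1, (-α)^n * ((1-2*u₁)*(1-2*u₂))^(n+2)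
        = ∫ u₂ in Ioo (0:ℝ) 1, ((-α)^n * (1-2*u₁)^(n+2)) * (1-2*u₂)^(n+2) := by
          refine setIntegral_congr_fun measurableSet_Ioo fun u₂ _ => ?_
          rw [mul_pow]; ring
      _ = ((-α)^n * (1-2*u₁)^(n+2)) * ∫ u₂ in Ioo (0:ℝ) 1, (1-2*u₂)^(n+2) :=
          integral_const_mul _ _
      _ = (-α)^n * (1-2*u₁)^(n+2) * ((1 + (-1:ℝ)^n)/(2*(n+3))) := by
          rw [integral_pow_aux]
          have : ((-1:ℝ))^(n+2) = (-1)^n := by rw [pow_add]; norm_num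
          rw [this]
          push_cast
          ring
  · intro n u₂ h₂
    have hg : |(1-2*u₁)*(1-2*u₂)| ≤ 1 := by
      rw [abs_mul]
      calc |1-2*u₁| * |1-2*u₂| ≤ 1 * 1 :=
            mul_le_mul (abs_lin_le h₁) (abs_lin_le h₂) (abs_nonneg _) zero_le_one
        _ = 1 := one_mul 1
    calc |(-α)^n * ((1-2*u₁)*(1-2*u₂))^(n+2)|
        = |α|^n * |(1-2*u₁)*(1-2*u₂)|^(n+2) := by
          rw [abs_mul, abs_pow, abs_pow, abs_neg]
      _ ≤ |α|^n * 1 := by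
          refine mul_le_mul_of_nonneg_left ?_ (by positivity)
          exact pow_le_one₀ (abs_nonneg _) hg
      _ = |α|^n := mul_one _

/-- For the EFGM copula with `|α| < 1`, the Fisher information for `α` with known
uniform marginals equals
`∫₀¹∫₀¹ (1-2u₁-2u₂+4u₁u₂)² / (1+α-2α(u₁+u₂)+4αu₁u₂) du₁ du₂ = Σ_{k≥1} α^{2k-2}/(1+2k)²`,
and in particular the series converges. -/
theorem efgm_fisher_information (α : ℝ) (hα : |α| < 1) :
    Summable (fun k : ℕ => α ^ (2 * k) / ((2 * k + 3 : ℝ)) ^ 2) ∧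
      ∫ u₁ in Ioo (0 : ℝ) 1, ∫ u₂ in Ioo (0 : ℝ) 1,
          (1 - 2 * u₁ - 2 * u₂ + 4 * u₁ * u₂) ^ 2 /
            (1 + α - 2 * α * (u₁ + u₂) + 4 * α * u₁ * u₂) =
        ∑' k : ℕ, α ^ (2 * k) / ((2 * k + 3 : ℝ)) ^ 2 := by
  have hα2 : α^2 < 1 := by nlinarith [abs_lt.1 hα]
  constructor
  · refine Summable.of_nonneg_of_le (fun k => ?_) (fun k => ?_)
      (summable_geometric_of_lt_one (sq_nonneg α) hα2)
    · rw [pow_mul]; positivity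
    · rw [pow_mul]
      refine div_le_self (by positivity) ?_
      nlinarith [Nat.cast_nonneg (α := ℝ) k]
  have hIn : ∀ n : ℕ, |(1 + (-1:ℝ)^n)/(2*((n:ℝ)+3))| ≤ 1 := by
    intro n
    rw [abs_div]
    refine div_le_one_of_le₀ ?_ (abs_nonneg _)
    have h1 : |1 + (-1:ℝ)^n| ≤ 2 := by
      calc |1 + (-1:ℝ)^n| ≤ |1| + |(-1:ℝ)^n| := abs_add_le _ _
        _ = 2 := by norm_num
    have h2 : |2*((n:ℝ)+3)| = 2*((n:ℝ)+3) := abs_of_pos (by positivity)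
    rw [h2]
    nlinarith [Nat.cast_nonneg (α := ℝ) n]
  have hmain : ∫ u₁ in Ioo (0 : ℝ) 1, ∫ u₂ in Ioo (0 : ℝ) 1,
          (1 - 2 * u₁ - 2 * u₂ + 4 * u₁ * u₂) ^ 2 /
            (1 + α - 2 * α * (u₁ + u₂) + 4 * α * u₁ * u₂)
      = ∑' n : ℕ, (-α)^n * ((1 + (-1:ℝ)^n)/(2*((n:ℝ)+3)))^2 := by
    rw [setIntegral_congr_fun measurableSet_Ioo (fun u₁ h₁ => inner_eq α hα h₁)]
    rw [swap_tsum_integral _ (fun n => by continuity) (fun n => |α|^n) ?_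
        (summable_geometric_of_lt_one (abs_nonneg α) hα)]
    · refine tsum_congr fun n => ?_
      calc ∫ u₁ in Ioo (0:ℝ) 1, (-α)^n * (1-2*u₁)^(n+2) * ((1 + (-1:ℝ)^n)/(2*(n+3)))
          = ∫ u₁ in Ioo (0:ℝ) 1,
              ((-α)^n * ((1 + (-1:ℝ)^n)/(2*((n:ℝ)+3)))) * (1-2*u₁)^(n+2) := by
            refine setIntegral_congr_fun measurableSet_Ioo fun u₁ _ => ?_
            ring
        _ = ((-α)^n * ((1 + (-1:ℝ)^n)/(2*((n:ℝ)+3)))) * ∫ u₁ in Ioo (0:ℝ) 1, (1-2*u₁)^(n+2) :=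
            integral_const_mul _ _
        _ = (-α)^n * ((1 + (-1:ℝ)^n)/(2*((n:ℝ)+3)))^2 := by
            rw [integral_pow_aux]
            have : ((-1:ℝ))^(n+2) = (-1)^n := by rw [pow_add]; norm_num
            rw [this]
            push_cast
            ring
    · intro n u₁ h₁
      calc |(-α)^n * (1-2*u₁)^(n+2) * ((1 + (-1:ℝ)^n)/(2*((n:ℝ)+3)))|
          = |α|^n * |1-2*u₁|^(n+2) * |(1 + (-1:ℝ)^n)/(2*((n:ℝ)+3))| := by
            rw [abs_mul, abs_mul, abs_pow, abs_pow, abs_neg]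
        _ ≤ |α|^n * 1 * 1 := by
            refine mul_le_mul (mul_le_mul_of_nonneg_left
              (pow_le_one₀ (abs_nonneg _) (abs_lin_le h₁)) (by positivity))
              (hIn n) (abs_nonneg _) (by positivity)
        _ = |α|^n := by ring
  rw [hmain]
  set F : ℕ → ℝ := fun n => (-α)^n * ((1 + (-1:ℝ)^n)/(2*((n:ℝ)+3)))^2 with hF
  have hinj : Function.Injective (fun k : ℕ => 2*k) := fun a b h => by dsimp only at h; omega
  have hsupp : Function.support F ⊆ Set.range (fun k : ℕ => 2*k) := by
    intro n hn
    rcases Nat.even_or_odd n with he | ho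
    · obtain ⟨k, hk⟩ := he
      exact ⟨k, by dsimp only; omega⟩
    · exfalso
      apply hn
      simp only [hF, ho.neg_one_pow]
      norm_num
  rw [← hinj.tsum_eq hsupp]
  refine tsum_congr fun k => ?_
  have hne : ((2*(k:ℝ))+3) ≠ 0 := by positivity
  simp only [hF]
  have h1 : ((-1:ℝ))^(2*k) = 1 := by
    rw [pow_mul]; norm_num
  have h2 : ((-α):ℝ)^(2*k) = α^(2*k) := by
    rw [pow_mul, pow_mul]; norm_num
  rw [h1, h2]
  push_cast
  field_simp
  ring
end
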